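/- Fix m ∈ ℕ and define the formal derivative D_m on ℂ^{ℓ̃} by (D_m f)_α = ∑_{j : insertion of z_m at position j in α gives β} f_β (i.e., (D_m f)_α = ∑_{0≤j≤|α|} f_{r_j(α)} where r_j inserts the letter z_m after position j). Then for q ≥ p + 3 and f with ‖f‖_p < ∞, one has ‖D_m f‖_q² ≤ (2m)^p ‖f‖_p², so D_m maps L²(ℓ̃, μ_{-p}) boundedly into L²(ℓ̃, μ_{-q}). -/

import Mathlib

/-- Weight `(2ℕ)^α = ∏_k (2 i_k)` of a word (letter `i` represents `z_{i+1}`). -/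
noncomputable def ncWeight (α : FreeMonoid ℕ) : ℝ :=
  (FreeMonoid.toList α |>.map (fun i => (2 * (i + 1) : ℝ))).prod

/-- `r_j(α)`: insertion of the letter `z_m` after position `j` of the word `α`. -/
def insertLetter (m : ℕ) (α : FreeMonoid ℕ) (j : ℕ) : FreeMonoid ℕ :=
  FreeMonoid.ofList ((FreeMonoid.toList α).take j ++ m :: (FreeMonoid.toList α).drop j)

/-- The formal derivative `D_m`: `(D_m f)_α = ∑_{0 ≤ j ≤ |α|} f_{r_j(α)}`. -/
noncomputable def Dm (m : ℕ) (f : FreeMonoid ℕ → ℂ) (α : FreeMonoid ℕ) : ℂ :=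
  ∑ j ∈ Finset.range ((FreeMonoid.toList α).length + 1), f (insertLetter m α j)

private lemma ncWeight_eq (α : FreeMonoid ℕ) :
    ncWeight α = ((FreeMonoid.toList α).map (fun i : ℕ => 2 * ((i:ℝ) + 1))).prod := by
  unfold ncWeight
  simp only [List.bind_eq_flatMap, List.pure_def]
  induction (FreeMonoid.toList α) with
  | nil => rfl
  | cons a t ih => simp only [List.flatMap_cons, List.map_cons, List.map_append, List.prod_cons,
      List.singleton_append, ih]

private lemma ncWeight_pos (α : FreeMonoid ℕ) : 0 < ncWeight α := by
  rw [ncWeight_eq]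
  induction (FreeMonoid.toList α) with
  | nil => simp
  | cons a t ih =>
    simp only [List.map_cons, List.prod_cons]
    exact mul_pos (by positivity) ih

private lemma two_pow_le_ncWeight (α : FreeMonoid ℕ) :
    (2:ℝ) ^ (FreeMonoid.toList α).length ≤ ncWeight α := by
  rw [ncWeight_eq]
  induction (FreeMonoid.toList α) with
  | nil => simp
  | cons a t ih =>
    simp only [List.map_cons, List.prod_cons, List.length_cons, pow_succ]
    have h2 : (2:ℝ) ≤ 2 * ((a:ℝ) + 1) := by
      have : (0:ℝ) ≤ (a:ℝ) := Nat.cast_nonneg a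
      nlinarith
    calc (2:ℝ) ^ t.length * 2 = 2 * (2:ℝ) ^ t.length := by ring
      _ ≤ (2 * ((a:ℝ) + 1)) * (t.map fun i : ℕ => (2 * ((i:ℝ) + 1))).prod :=
        mul_le_mul h2 ih (by positivity) (by positivity)

private lemma toList_insertLetter (m : ℕ) (α : FreeMonoid ℕ) (j : ℕ) :
    FreeMonoid.toList (insertLetter m α j) =
      (FreeMonoid.toList α).take j ++ m :: (FreeMonoid.toList α).drop j := by
  simp [insertLetter]

private lemma length_insertLetter (m : ℕ) {α : FreeMonoid ℕ} {j : ℕ}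
    (hj : j ≤ (FreeMonoid.toList α).length) :
    (FreeMonoid.toList (insertLetter m α j)).length = (FreeMonoid.toList α).length + 1 := by
  rw [toList_insertLetter]
  simp only [List.length_append, List.length_take, List.length_cons, List.length_drop]
  omega

private lemma ncWeight_insertLetter (m : ℕ) (α : FreeMonoid ℕ) (j : ℕ) :
    ncWeight (insertLetter m α j) = (2 * (m + 1) : ℝ) * ncWeight α := by
  rw [ncWeight_eq, ncWeight_eq]
  rw [toList_insertLetter, List.map_append, List.prod_append, List.map_cons, List.prod_cons]
  conv_rhs => rw [← List.take_append_drop j (FreeMonoid.toList α), List.map_append,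
    List.prod_append]
  ring

private lemma insert_eraseIdx (a : ℕ) : ∀ (j : ℕ) (l : List ℕ), j ≤ l.length →
    (l.take j ++ a :: l.drop j).eraseIdx j = l
  | 0, l, _ => by simp
  | j+1, [], h => by simp at h
  | j+1, b :: t, h => by
    simp only [List.take_succ_cons, List.drop_succ_cons, List.cons_append,
      List.eraseIdx_cons_succ]
    rw [insert_eraseIdx a j t (by simpa using h)]

private lemma insertLetter_inj {m j : ℕ} {α α' : FreeMonoid ℕ}
    (h1 : j ≤ (FreeMonoid.toList α).length) (h2 : j ≤ (FreeMonoid.toList α').length)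
    (h : insertLetter m α j = insertLetter m α' j) : α = α' := by
  have h' := congrArg (fun β => (FreeMonoid.toList β).eraseIdx j) h
  simp only [toList_insertLetter] at h'
  rw [insert_eraseIdx m j _ h1, insert_eraseIdx m j _ h2] at h'
  exact FreeMonoid.toList.injective h'

private lemma cube_le (n : ℕ) : (n+1)^2 ≤ 2^(3*n) := by
  induction n with
  | zero => norm_num
  | succ n ih =>
    have h8 : 2^(3*(n+1)) = 8 * 2^(3*n) := by rw [Nat.mul_succ, pow_add]; ring
    have h4 : (n+1+1)^2 ≤ 4*(n+1)^2 := by zify; nlinarith [Int.ofNat_nonneg n]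
    calc (n+1+1)^2 ≤ 4*(n+1)^2 := h4
      _ ≤ 4 * 2^(3*n) := by omega
      _ ≤ 8 * 2^(3*n) := by omega
      _ = 2^(3*(n+1)) := h8.symm

private lemma coef_le (L : ℕ) : (L:ℝ)^2 / (2:ℝ) ^ (3*(L-1)) ≤ 1 := by
  cases L with
  | zero => norm_num
  | succ n =>
    rw [Nat.add_sub_cancel, div_le_one (by positivity)]
    have := cube_le n
    calc ((n+1:ℕ):ℝ)^2 = (((n+1)^2 : ℕ) : ℝ) := by push_cast; ring
      _ ≤ ((2^(3*n) : ℕ) : ℝ) := by exact_mod_cast this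
      _ = (2:ℝ)^(3*n) := by push_cast; ring

private lemma core (p q n : ℕ) (hpq : p + 3 ≤ q) (C w : ℝ) (hC : 0 < C)
    (hw : (2:ℝ)^n ≤ w) :
    w ^ (-(q:ℤ)) ≤ C ^ p * (C * w) ^ (-(p:ℤ)) / 2 ^ (3*n) := by
  have hw0 : 0 < w := lt_of_lt_of_le (by positivity) hw
  have hw1 : (1:ℝ) ≤ w := le_trans (one_le_pow₀ one_le_two) hw
  obtain ⟨r, hr⟩ : ∃ r, q = p + 3 + r := ⟨q - (p+3), by omega⟩
  subst hr
  rw [zpow_neg, zpow_natCast, zpow_neg, zpow_natCast, mul_pow]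
  rw [show C ^ p * (C ^ p * w ^ p)⁻¹ = (w ^ p)⁻¹ by
    field_simp]
  rw [div_eq_mul_inv, ← mul_inv]
  apply inv_anti₀ (by positivity)
  have h1 : (2:ℝ)^(3*n) ≤ w^3 := by
    calc (2:ℝ)^(3*n) = ((2:ℝ)^n)^3 := by rw [← pow_mul, Nat.mul_comm]
      _ ≤ w^3 := pow_le_pow_left₀ (by positivity) hw 3
  have h2 : (1:ℝ) ≤ w^r := one_le_pow₀ hw1
  calc w ^ p * 2 ^ (3*n) ≤ w ^ p * w ^ 3 :=
        mul_le_mul_of_nonneg_left h1 (by positivity)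
    _ ≤ (w ^ p * w ^ 3) * w ^ r := le_mul_of_one_le_right (by positivity) h2
    _ = w ^ (p + 3 + r) := by ring

/-- The dominating function on pairs `(β, j)`. -/
private noncomputable def auxG (m p : ℕ) (f : FreeMonoid ℕ → ℂ) (x : FreeMonoid ℕ × ℕ) : ℝ :=
  if x.2 < (FreeMonoid.toList x.1).length then
    ((FreeMonoid.toList x.1).length : ℝ) / (2:ℝ) ^ (3 * ((FreeMonoid.toList x.1).length - 1)) *
      ((2 * (m + 1) : ℝ) ^ p * (‖f x.1‖ ^ 2 * ncWeight x.1 ^ (-(p : ℤ))))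
  else 0

private lemma auxG_nonneg (m p : ℕ) (f : FreeMonoid ℕ → ℂ) (x : FreeMonoid ℕ × ℕ) :
    0 ≤ auxG m p f x := by
  unfold auxG
  split
  · have := (ncWeight_pos x.1).le
    have h2 : (0:ℝ) ≤ ncWeight x.1 ^ (-(p : ℤ)) := zpow_nonneg this _
    positivity
  · exact le_refl 0

/-- For `q ≥ p + 3` and `f` with `‖f‖_p < ∞`, `‖D_m f‖_q² ≤ (2m)^p ‖f‖_p²`; hence `D_m`
maps `L²(ℓ̃, μ_{-p})` boundedly into `L²(ℓ̃, μ_{-q})`. (The letter `m : ℕ` represents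
`z_{m+1}`, of weight `2(m+1)`.) -/
theorem Dm_bounded (m : ℕ) (p q : ℕ) (hpq : p + 3 ≤ q) (f : FreeMonoid ℕ → ℂ)
    (hf : Summable (fun α => ‖f α‖ ^ 2 * ncWeight α ^ (-(p : ℤ)))) :
    Summable (fun α => ‖Dm m f α‖ ^ 2 * ncWeight α ^ (-(q : ℤ))) ∧
      (∑' α, ‖Dm m f α‖ ^ 2 * ncWeight α ^ (-(q : ℤ))) ≤
        (2 * (m + 1) : ℝ) ^ p * ∑' α, ‖f α‖ ^ 2 * ncWeight α ^ (-(p : ℤ)) := by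
  classical
  have hC : (0:ℝ) < 2 * ((m:ℝ) + 1) := by positivity
  set G : FreeMonoid ℕ × ℕ → ℝ := auxG m p f with hGdef
  set F : (Σ α : FreeMonoid ℕ, Fin ((FreeMonoid.toList α).length + 1)) → ℝ := fun s =>
    (((FreeMonoid.toList s.1).length : ℝ) + 1) *
      (‖f (insertLetter m s.1 (s.2 : ℕ))‖ ^ 2 * ncWeight s.1 ^ (-(q : ℤ))) with hFdef
  set ψ : (Σ α : FreeMonoid ℕ, Fin ((FreeMonoid.toList α).length + 1)) → FreeMonoid ℕ × ℕ :=
    fun s => (insertLetter m s.1 (s.2 : ℕ), (s.2 : ℕ)) with hψdef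
  have hG0 : ∀ x, 0 ≤ G x := auxG_nonneg m p f
  -- injectivity of ψ
  have hψ : Function.Injective ψ := by
    rintro ⟨α, j⟩ ⟨α', j'⟩ h
    simp only [hψdef, Prod.mk.injEq] at h
    have hj : (j : ℕ) = (j' : ℕ) := h.2
    have h1 : insertLetter m α (j:ℕ) = insertLetter m α' (j:ℕ) :=
      h.1.trans (congrArg (insertLetter m α') hj.symm)
    have hαα' : α = α' := insertLetter_inj (Nat.lt_succ_iff.mp j.isLt)
      (by rw [hj]; exact Nat.lt_succ_iff.mp j'.isLt) h1
    subst hαα'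
    exact congrArg (Sigma.mk α) (Fin.ext hj)
  -- pointwise bound F ≤ G ∘ ψ
  have hFG : ∀ s, F s ≤ G (ψ s) := by
    rintro ⟨α, j⟩
    have hj : (j:ℕ) ≤ (FreeMonoid.toList α).length := Nat.lt_succ_iff.mp j.isLt
    have hlen := length_insertLetter m hj
    simp only [hFdef, hψdef, hGdef, auxG]
    rw [if_pos (by rw [hlen]; exact Nat.lt_succ_of_le hj)]
    rw [hlen, Nat.add_sub_cancel, ncWeight_insertLetter m α (j:ℕ)]
    have hkey := core p q (FreeMonoid.toList α).length hpq (2 * ((m:ℝ) + 1)) (ncWeight α) hC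
      (two_pow_le_ncWeight α)
    push_cast
    calc ((FreeMonoid.toList α).length + 1 : ℝ) *
          (‖f (insertLetter m α (j:ℕ))‖ ^ 2 * ncWeight α ^ (-(q : ℤ)))
        ≤ ((FreeMonoid.toList α).length + 1 : ℝ) *
          (‖f (insertLetter m α (j:ℕ))‖ ^ 2 *
            ((2 * ((m:ℝ) + 1)) ^ p * (2 * ((m:ℝ) + 1) * ncWeight α) ^ (-(p:ℤ)) /
              2 ^ (3 * (FreeMonoid.toList α).length))) := by
          apply mul_le_mul_of_nonneg_left _ (by positivity)
          exact mul_le_mul_of_nonneg_left hkey (by positivity)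
      _ = ((FreeMonoid.toList α).length + 1 : ℝ) / 2 ^ (3 * (FreeMonoid.toList α).length) *
          ((2 * ((m:ℝ) + 1)) ^ p *
            (‖f (insertLetter m α (j:ℕ))‖ ^ 2 *
              (2 * ((m:ℝ) + 1) * ncWeight α) ^ (-(p:ℤ)))) := by ring
  -- fiberwise description of G
  have hfib0 : ∀ β : FreeMonoid ℕ, ∀ j ∉ Finset.range (FreeMonoid.toList β).length,
      G (β, j) = 0 := by
    intro β j hj
    simp only [hGdef, auxG]
    rw [if_neg]
    simpa using hj
  have hfibsum : ∀ β, Summable (fun j => G (β, j)) :=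
    fun β => summable_of_ne_finset_zero (hfib0 β)
  have htsum_fib : ∀ β, ∑' j, G (β, j) =
      ((FreeMonoid.toList β).length : ℝ)^2 / (2:ℝ) ^ (3 * ((FreeMonoid.toList β).length - 1)) *
        ((2 * (m + 1) : ℝ) ^ p * (‖f β‖ ^ 2 * ncWeight β ^ (-(p : ℤ)))) := by
    intro β
    rw [tsum_eq_sum (hfib0 β)]
    have hval : ∀ j ∈ Finset.range (FreeMonoid.toList β).length, G (β, j) =
        ((FreeMonoid.toList β).length : ℝ) / (2:ℝ) ^ (3 * ((FreeMonoid.toList β).length - 1)) *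
          ((2 * (m + 1) : ℝ) ^ p * (‖f β‖ ^ 2 * ncWeight β ^ (-(p : ℤ)))) := by
      intro j hj
      simp only [hGdef, auxG]
      rw [if_pos (Finset.mem_range.mp hj)]
    rw [Finset.sum_congr rfl hval, Finset.sum_const, Finset.card_range, nsmul_eq_mul]
    ring
  have hT_le : ∀ β : FreeMonoid ℕ,
      ((FreeMonoid.toList β).length : ℝ)^2 / (2:ℝ) ^ (3 * ((FreeMonoid.toList β).length - 1)) *
        ((2 * (m + 1) : ℝ) ^ p * (‖f β‖ ^ 2 * ncWeight β ^ (-(p : ℤ)))) ≤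
        (2 * (m + 1) : ℝ) ^ p * (‖f β‖ ^ 2 * ncWeight β ^ (-(p : ℤ))) := by
    intro β
    have h1 := coef_le (FreeMonoid.toList β).length
    have hX : (0:ℝ) ≤ (2 * (m + 1) : ℝ) ^ p * (‖f β‖ ^ 2 * ncWeight β ^ (-(p : ℤ))) := by
      have h2 : (0:ℝ) ≤ ncWeight β ^ (-(p : ℤ)) := zpow_nonneg (ncWeight_pos β).le _
      positivity
    calc _ ≤ 1 * ((2 * (m + 1) : ℝ) ^ p * (‖f β‖ ^ 2 * ncWeight β ^ (-(p : ℤ)))) :=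
          mul_le_mul_of_nonneg_right h1 hX
      _ = _ := one_mul _
  have hgsum : Summable (fun β => (2 * (m + 1) : ℝ) ^ p *
      (‖f β‖ ^ 2 * ncWeight β ^ (-(p : ℤ)))) := hf.mul_left _
  have hT_nonneg : ∀ β : FreeMonoid ℕ, (0:ℝ) ≤
      ((FreeMonoid.toList β).length : ℝ)^2 / (2:ℝ) ^ (3 * ((FreeMonoid.toList β).length - 1)) *
        ((2 * (m + 1) : ℝ) ^ p * (‖f β‖ ^ 2 * ncWeight β ^ (-(p : ℤ)))) := by
    intro β
    have h2 : (0:ℝ) ≤ ncWeight β ^ (-(p : ℤ)) := zpow_nonneg (ncWeight_pos β).le _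
    positivity
  have hTsum : Summable (fun β => ∑' j, G (β, j)) :=
    (Summable.of_nonneg_of_le hT_nonneg hT_le hgsum).congr (fun β => (htsum_fib β).symm)
  have hGsum : Summable G :=
    (summable_prod_of_nonneg (fun x => hG0 x)).mpr ⟨hfibsum, hTsum⟩
  have hGψsum : Summable (G ∘ ψ) := hGsum.comp_injective hψ
  have hF0 : ∀ s, 0 ≤ F s := by
    intro s
    have h2 : (0:ℝ) ≤ ncWeight s.1 ^ (-(q : ℤ)) := zpow_nonneg (ncWeight_pos s.1).le _
    simp only [hFdef]
    positivity
  have hFsum : Summable F := Summable.of_nonneg_of_le hF0 hFG hGψsum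
  have hFG_tsum : ∑' s, F s ≤ ∑' x, G x :=
    Summable.tsum_le_tsum_of_inj ψ hψ (fun c _ => hG0 c) hFG hFsum hGsum
  have hG_tsum : ∑' x, G x ≤
      (2 * (m + 1) : ℝ) ^ p * ∑' β, ‖f β‖ ^ 2 * ncWeight β ^ (-(p : ℤ)) := by
    rw [Summable.tsum_prod' hGsum hfibsum]
    calc ∑' β, ∑' j, G (β, j)
        ≤ ∑' β, (2 * (m + 1) : ℝ) ^ p * (‖f β‖ ^ 2 * ncWeight β ^ (-(p : ℤ))) :=
          Summable.tsum_le_tsum (fun β => le_of_eq_of_le (htsum_fib β) (hT_le β)) hTsum hgsum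
      _ = _ := tsum_mul_left
  -- Cauchy–Schwarz step
  have hH : ∀ α : FreeMonoid ℕ, ‖Dm m f α‖ ^ 2 * ncWeight α ^ (-(q : ℤ)) ≤
      ∑' (j : Fin ((FreeMonoid.toList α).length + 1)), F ⟨α, j⟩ := by
    intro α
    set N := (FreeMonoid.toList α).length + 1 with hN
    have hCS : ‖Dm m f α‖ ^ 2 ≤
        (N : ℝ) * ∑ j ∈ Finset.range N, ‖f (insertLetter m α j)‖ ^ 2 := by
      have h1 : ‖Dm m f α‖ ≤ ∑ j ∈ Finset.range N, ‖f (insertLetter m α j)‖ := by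
        unfold Dm
        exact norm_sum_le _ _
      have h2 : (∑ j ∈ Finset.range N, ‖f (insertLetter m α j)‖) ^ 2 ≤
          (Finset.range N).card * ∑ j ∈ Finset.range N, ‖f (insertLetter m α j)‖ ^ 2 :=
        sq_sum_le_card_mul_sum_sq
      calc ‖Dm m f α‖ ^ 2 ≤ (∑ j ∈ Finset.range N, ‖f (insertLetter m α j)‖) ^ 2 :=
            pow_le_pow_left₀ (norm_nonneg _) h1 2
        _ ≤ (Finset.range N).card * ∑ j ∈ Finset.range N, ‖f (insertLetter m α j)‖ ^ 2 := h2
        _ = (N : ℝ) * ∑ j ∈ Finset.range N, ‖f (insertLetter m α j)‖ ^ 2 := by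
            rw [Finset.card_range]
    have hsum_eq : ∑' (j : Fin N), F ⟨α, j⟩ =
        ((N : ℝ) * ∑ j ∈ Finset.range N, ‖f (insertLetter m α j)‖ ^ 2) *
          ncWeight α ^ (-(q : ℤ)) := by
      rw [tsum_fintype]
      have : ∀ j : Fin N, F ⟨α, j⟩ =
          (N : ℝ) * (‖f (insertLetter m α (j : ℕ))‖ ^ 2 * ncWeight α ^ (-(q : ℤ))) := by
        intro j
        simp only [hFdef]
        push_cast [hN]
        ring
      rw [Finset.sum_congr rfl (fun j _ => this j)]
      rw [Fin.sum_univ_eq_sum_range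
        (fun k => (N : ℝ) * (‖f (insertLetter m α k)‖ ^ 2 * ncWeight α ^ (-(q : ℤ)))) N]
      rw [← Finset.mul_sum, ← Finset.sum_mul, mul_assoc]
    rw [hsum_eq]
    exact mul_le_mul_of_nonneg_right hCS (zpow_nonneg (ncWeight_pos α).le _)
  have hHsum : Summable (fun α : FreeMonoid ℕ =>
      ∑' (j : Fin ((FreeMonoid.toList α).length + 1)), F ⟨α, j⟩) := hFsum.sigma
  have h1 : Summable (fun α => ‖Dm m f α‖ ^ 2 * ncWeight α ^ (-(q : ℤ))) := by
    apply Summable.of_nonneg_of_le _ hH hHsum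
    intro α
    exact mul_nonneg (by positivity) (zpow_nonneg (ncWeight_pos α).le _)
  refine ⟨h1, ?_⟩
  calc ∑' α, ‖Dm m f α‖ ^ 2 * ncWeight α ^ (-(q : ℤ))
      ≤ ∑' (α : FreeMonoid ℕ), ∑' (j : Fin ((FreeMonoid.toList α).length + 1)), F ⟨α, j⟩ :=
        Summable.tsum_le_tsum hH h1 hHsum
    _ = ∑' s, F s := (Summable.tsum_sigma hFsum).symm
    _ ≤ ∑' x, G x := hFG_tsum
    _ ≤ (2 * (m + 1) : ℝ) ^ p * ∑' α, ‖f α‖ ^ 2 * ncWeight α ^ (-(p : ℤ)) := hG_tsum
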